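/- In any model category, the class of weak equivalences between cofibrant objects is closed under cobase change along cofibrations: given a pushout square with A → B a weak equivalence between cofibrant objects and A → A' a cofibration, the induced map A' → B' = A' ∐_A B is a weak equivalence. -/
import Mathlib


open CategoryTheory CategoryTheory.Limits

universe v u

/-- A (Quillen) model structure on a category `M`: three classes of maps
(weak equivalences, fibrations, cofibrations) satisfying two-out-of-three,
closure under retracts, the lifting axioms, and the factorization axioms.
(Bicompleteness of `M` is imposed separately as `HasLimits`/`HasColimits`.) -/
structure ModelStructure (M : Type u) [Category.{v} M] where
  W : MorphismProperty M
  Fib : MorphismProperty M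
  Cof : MorphismProperty M
  w_two_out_of_three : W.HasTwoOutOfThreeProperty
  retract : ∀ (P : MorphismProperty M), P = W ∨ P = Fib ∨ P = Cof →
    ∀ {A B A' B' : M} (f : A ⟶ B) (f' : A' ⟶ B') (iA : A' ⟶ A) (rA : A ⟶ A')
      (iB : B' ⟶ B) (rB : B ⟶ B'),
      iA ≫ rA = 𝟙 A' → iB ≫ rB = 𝟙 B' → iA ≫ f = f' ≫ iB →
      rA ≫ f' = f ≫ rB → P f → P f'
  lift_cof_trivFib : ∀ {A B X Y : M} (f : A ⟶ B) (g : X ⟶ Y),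
    Cof f → Fib g → W g → HasLiftingProperty f g
  lift_trivCof_fib : ∀ {A B X Y : M} (f : A ⟶ B) (g : X ⟶ Y),
    Cof f → W f → Fib g → HasLiftingProperty f g
  fact_cof_trivFib : ∀ {X Y : M} (f : X ⟶ Y),
    ∃ (Z : M) (g : X ⟶ Z) (h : Z ⟶ Y), Cof g ∧ Fib h ∧ W h ∧ g ≫ h = f
  fact_trivCof_fib : ∀ {X Y : M} (f : X ⟶ Y),
    ∃ (Z : M) (g : X ⟶ Z) (h : Z ⟶ Y), Cof g ∧ W g ∧ Fib h ∧ g ≫ h = f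

/-- An object is cofibrant if the map from the initial object is a
cofibration. -/
def ModelStructure.Cofibrant {M : Type u} [Category.{v} M] [HasInitial M]
    (ms : ModelStructure M) (X : M) : Prop :=
  ms.Cof (initial.to X)

section Auxiliary

variable {M : Type u} [Category.{v} M]

namespace ModelStructure

/-- Retract argument: a map with the LLP against all fibrations is a trivial
cofibration. -/
lemma trivCof_of_llp (ms : ModelStructure M) {X Y : M} (e : X ⟶ Y)
    (h : ∀ ⦃U V : M⦄ (g : U ⟶ V), ms.Fib g → HasLiftingProperty e g) :
    ms.Cof e ∧ ms.W e := by
  obtain ⟨Z, g, p, hgcof, hgw, hpfib, hfac⟩ := ms.fact_trivCof_fib e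
  haveI := h p hpfib
  have sq : CommSq g e p (𝟙 Y) := ⟨by rw [hfac, Category.comp_id]⟩
  have h1 : (𝟙 X) ≫ (𝟙 X) = 𝟙 X := Category.id_comp _
  have h2 : sq.lift ≫ p = 𝟙 Y := sq.fac_right
  have h3 : (𝟙 X) ≫ g = e ≫ sq.lift := by rw [Category.id_comp, sq.fac_left]
  have h4 : (𝟙 X) ≫ e = g ≫ p := by rw [Category.id_comp, hfac]
  exact ⟨ms.retract ms.Cof (Or.inr (Or.inr rfl)) g e (𝟙 X) (𝟙 X) sq.lift p h1 h2 h3 h4 hgcof,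
    ms.retract ms.W (Or.inl rfl) g e (𝟙 X) (𝟙 X) sq.lift p h1 h2 h3 h4 hgw⟩

/-- Retract argument: a map with the LLP against all trivial fibrations is a
cofibration. -/
lemma cof_of_llp (ms : ModelStructure M) {X Y : M} (e : X ⟶ Y)
    (h : ∀ ⦃U V : M⦄ (g : U ⟶ V), ms.Fib g → ms.W g → HasLiftingProperty e g) :
    ms.Cof e := by
  obtain ⟨Z, g, p, hgcof, hpfib, hpw, hfac⟩ := ms.fact_cof_trivFib e
  haveI := h p hpfib hpw
  have sq : CommSq g e p (𝟙 Y) := ⟨by rw [hfac, Category.comp_id]⟩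
  have h1 : (𝟙 X) ≫ (𝟙 X) = 𝟙 X := Category.id_comp _
  have h2 : sq.lift ≫ p = 𝟙 Y := sq.fac_right
  have h3 : (𝟙 X) ≫ g = e ≫ sq.lift := by rw [Category.id_comp, sq.fac_left]
  have h4 : (𝟙 X) ≫ e = g ≫ p := by rw [Category.id_comp, hfac]
  exact ms.retract ms.Cof (Or.inr (Or.inr rfl)) g e (𝟙 X) (𝟙 X) sq.lift p h1 h2 h3 h4 hgcof

/-- Identities are weak equivalences. -/
lemma w_id (ms : ModelStructure M) (X : M) : ms.W (𝟙 X) :=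
  (ms.trivCof_of_llp (𝟙 X) (fun _ _ g _ => inferInstance)).2

/-- Lifting properties pass to cobase change. -/
lemma llp_pushout {Z X Y P U V : M} {g₁ : Z ⟶ X} {g₂ : Z ⟶ Y} {h₁ : X ⟶ P} {h₂ : Y ⟶ P}
    (spo : IsPushout g₁ g₂ h₁ h₂) (p : U ⟶ V) [HasLiftingProperty g₁ p] :
    HasLiftingProperty h₂ p := by
  constructor
  intro t b s
  have sq2 : CommSq (g₂ ≫ t) g₁ p (h₁ ≫ b) :=
    ⟨by rw [Category.assoc, s.w, ← Category.assoc, ← spo.w, Category.assoc]⟩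
  refine CommSq.HasLift.mk' ⟨spo.desc sq2.lift t sq2.fac_left, spo.inr_desc _ _ _, ?_⟩
  apply spo.hom_ext
  · rw [← Category.assoc, spo.inl_desc, sq2.fac_right]
  · rw [← Category.assoc, spo.inr_desc, s.w]

/-- Cofibrations are closed under composition. -/
lemma cof_comp (ms : ModelStructure M) {X Y Z : M} {e₁ : X ⟶ Y} {e₂ : Y ⟶ Z}
    (h₁ : ms.Cof e₁) (h₂ : ms.Cof e₂) : ms.Cof (e₁ ≫ e₂) := by
  apply ms.cof_of_llp
  intro U V g hfib hw
  haveI := ms.lift_cof_trivFib e₁ g h₁ hfib hw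
  haveI := ms.lift_cof_trivFib e₂ g h₂ hfib hw
  infer_instance

/-- Cofibrations are stable under cobase change. -/
lemma cof_pushout (ms : ModelStructure M) {Z X Y P : M} {g₁ : Z ⟶ X} {g₂ : Z ⟶ Y}
    {h₁ : X ⟶ P} {h₂ : Y ⟶ P} (spo : IsPushout g₁ g₂ h₁ h₂) (hg : ms.Cof g₁) :
    ms.Cof h₂ := by
  apply ms.cof_of_llp
  intro U V g hfib hw
  haveI := ms.lift_cof_trivFib g₁ g hg hfib hw
  exact llp_pushout spo g

/-- Trivial cofibrations are stable under cobase change. -/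
lemma trivcof_pushout (ms : ModelStructure M) {Z X Y P : M} {g₁ : Z ⟶ X} {g₂ : Z ⟶ Y}
    {h₁ : X ⟶ P} {h₂ : Y ⟶ P} (spo : IsPushout g₁ g₂ h₁ h₂)
    (hg : ms.Cof g₁ ∧ ms.W g₁) : ms.Cof h₂ ∧ ms.W h₂ := by
  apply ms.trivCof_of_llp
  intro U V g hfib
  haveI := ms.lift_trivCof_fib g₁ g hg.1 hg.2 hfib
  exact llp_pushout spo g

/-- The key "Reedy/Ken Brown" lemma: a map of span diagrams whose component at
the free vertex is a trivial cofibration and whose relative latching map at the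
cofibration vertex is a trivial cofibration induces a trivial cofibration on
pushouts. -/
lemma kenBrown (ms : ModelStructure M) {Xa Xb Xc Ya Yb Yc P Q PB : M}
    {l : Xa ⟶ Xb} {r : Xa ⟶ Xc} {l' : Ya ⟶ Yb} {r' : Ya ⟶ Yc}
    {φa : Xa ⟶ Ya} {φb : Xb ⟶ Yb} {φc : Xc ⟶ Yc}
    (natr : r ≫ φc = φa ≫ r')
    {bX : Xb ⟶ P} {cX : Xc ⟶ P} (sqX : IsPushout l r bX cX)
    {bY : Yb ⟶ Q} {cY : Yc ⟶ Q} (sqY : IsPushout l' r' bY cY)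
    {u : Xb ⟶ PB} {v : Ya ⟶ PB} (sqL : IsPushout l φa u v)
    {wφ : PB ⟶ Yb} (hwu : u ≫ wφ = φb) (hwv : v ≫ wφ = l')
    (hφc : ms.Cof φc ∧ ms.W φc) (hwφ : ms.Cof wφ ∧ ms.W wφ)
    {π : P ⟶ Q} (hπb : bX ≫ π = φb ≫ bY) (hπc : cX ≫ π = φc ≫ cY) :
    ms.Cof π ∧ ms.W π := by
  apply ms.trivCof_of_llp
  intro U V g hg
  constructor
  intro t b s
  haveI := ms.lift_trivCof_fib φc g hφc.1 hφc.2 hg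
  haveI := ms.lift_trivCof_fib wφ g hwφ.1 hwφ.2 hg
  -- lift at the free vertex c
  have sqc : CommSq (cX ≫ t) φc g (cY ≫ b) :=
    ⟨by rw [Category.assoc, s.w, ← Category.assoc, hπc, Category.assoc]⟩
  -- the latching-corrected top map for the lift at the vertex b
  have Td : l ≫ (bX ≫ t) = φa ≫ (r' ≫ sqc.lift) := by
    have h1 : l ≫ (bX ≫ t) = r ≫ (cX ≫ t) := by
      rw [← Category.assoc, sqX.w, Category.assoc]
    have h2 : φa ≫ (r' ≫ sqc.lift) = r ≫ (cX ≫ t) := by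
      rw [← Category.assoc, ← natr, Category.assoc, sqc.fac_left]
    rw [h1, h2]
  have sqb : CommSq (sqL.desc (bX ≫ t) (r' ≫ sqc.lift) Td) wφ g (bY ≫ b) := by
    constructor
    apply sqL.hom_ext
    · rw [← Category.assoc, sqL.inl_desc, Category.assoc, s.w, ← Category.assoc, hπb,
        ← Category.assoc, ← Category.assoc, hwu]
    · rw [← Category.assoc, sqL.inr_desc, Category.assoc, sqc.fac_right,
        ← Category.assoc, ← sqY.w, ← Category.assoc, ← Category.assoc, hwv]
  have w2 : l' ≫ sqb.lift = r' ≫ sqc.lift := by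
    rw [← hwv, Category.assoc, sqb.fac_left, sqL.inr_desc]
  refine CommSq.HasLift.mk' ⟨sqY.desc sqb.lift sqc.lift w2, ?_, ?_⟩
  · apply sqX.hom_ext
    · rw [← Category.assoc, hπb, Category.assoc, sqY.inl_desc, ← hwu, Category.assoc,
        sqb.fac_left, sqL.inl_desc]
    · rw [← Category.assoc, hπc, Category.assoc, sqY.inr_desc, sqc.fac_left]
  · apply sqY.hom_ext
    · rw [← Category.assoc, sqY.inl_desc, sqb.fac_right]
    · rw [← Category.assoc, sqY.inr_desc, sqc.fac_right]

end ModelStructure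

end Auxiliary

/-!
STATEMENT 14: In any model category, the class of weak equivalences between
cofibrant objects is closed under cobase change along cofibrations: in a
pushout square with f : A → B a weak equivalence between cofibrant objects
and i : A → A' a cofibration, the induced map f' : A' → B' = A' ∐_A B is a
weak equivalence.
-/

/-- Weak equivalences between cofibrant objects are closed
under cobase change along cofibrations. -/
theorem weq_cofibrant_stable_under_cobase_change {M : Type u}
    [Category.{v} M] [HasLimits M] [HasColimits M] (ms : ModelStructure M)
    {A B A' B' : M} (f : A ⟶ B) (i : A ⟶ A') (i' : B ⟶ B') (f' : A' ⟶ B')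
    (sq : IsPushout f i i' f')
    (hA : ms.Cofibrant A) (hB : ms.Cofibrant B)
    (hf : ms.W f) (hi : ms.Cof i) :
    ms.W f' := by
  haveI := ms.w_two_out_of_three
  -- A' is cofibrant
  have hA' : ms.Cof (initial.to A') := by
    have hh : initial.to A' = initial.to A ≫ i := initial.hom_ext _ _
    rw [hh]; exact ms.cof_comp hA hi
  -- coproduct inclusions are cofibrations
  have hinlAA : ms.Cof (coprod.inl : A ⟶ A ⨿ A) :=
    ms.cof_pushout (IsPushout.of_hasBinaryCoproduct' A A).flip hA
  have hinrAA : ms.Cof (coprod.inr : A ⟶ A ⨿ A) :=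
    ms.cof_pushout (IsPushout.of_hasBinaryCoproduct' A A) hA
  have hinlAB : ms.Cof (coprod.inl : A ⟶ A ⨿ B) :=
    ms.cof_pushout (IsPushout.of_hasBinaryCoproduct' A B).flip hB
  have hinrAB : ms.Cof (coprod.inr : B ⟶ A ⨿ B) :=
    ms.cof_pushout (IsPushout.of_hasBinaryCoproduct' A B) hA
  -- Step 1: factor the codiagonal of A
  obtain ⟨Ta, γa, πa, hγa, hπaF, hπaW, hfa⟩ := ms.fact_cof_trivFib (coprod.desc (𝟙 A) (𝟙 A))
  obtain ⟨κ₁a, hκ₁a_def⟩ : ∃ k : A ⟶ Ta, k = coprod.inl ≫ γa := ⟨_, rfl⟩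
  obtain ⟨κ₂a, hκ₂a_def⟩ : ∃ k : A ⟶ Ta, k = coprod.inr ≫ γa := ⟨_, rfl⟩
  have hκ₁aπ : κ₁a ≫ πa = 𝟙 A := by rw [hκ₁a_def, Category.assoc, hfa, coprod.inl_desc]
  have hκ₂aπ : κ₂a ≫ πa = 𝟙 A := by rw [hκ₂a_def, Category.assoc, hfa, coprod.inr_desc]
  have hκ₁aC : ms.Cof κ₁a := by rw [hκ₁a_def]; exact ms.cof_comp hinlAA hγa
  have hκ₂aC : ms.Cof κ₂a := by rw [hκ₂a_def]; exact ms.cof_comp hinrAA hγa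
  have hκ₁aW : ms.W κ₁a := ms.W.of_postcomp κ₁a πa hπaW (by rw [hκ₁aπ]; exact ms.w_id A)
  have hκ₂aW : ms.W κ₂a := ms.W.of_postcomp κ₂a πa hπaW (by rw [hκ₂aπ]; exact ms.w_id A)
  -- Step 2: factor the mapping-cylinder map at the free vertex
  obtain ⟨Tc, γc, πc, hγc, hπcF, hπcW, hfc⟩ := ms.fact_cof_trivFib (coprod.desc f (𝟙 B))
  obtain ⟨κ₁c, hκ₁c_def⟩ : ∃ k : A ⟶ Tc, k = coprod.inl ≫ γc := ⟨_, rfl⟩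
  obtain ⟨κ₂c, hκ₂c_def⟩ : ∃ k : B ⟶ Tc, k = coprod.inr ≫ γc := ⟨_, rfl⟩
  have hκ₁cπ : κ₁c ≫ πc = f := by rw [hκ₁c_def, Category.assoc, hfc, coprod.inl_desc]
  have hκ₂cπ : κ₂c ≫ πc = 𝟙 B := by rw [hκ₂c_def, Category.assoc, hfc, coprod.inr_desc]
  have hκ₁cC : ms.Cof κ₁c := by rw [hκ₁c_def]; exact ms.cof_comp hinlAB hγc
  have hκ₂cC : ms.Cof κ₂c := by rw [hκ₂c_def]; exact ms.cof_comp hinrAB hγc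
  have hκ₁cW : ms.W κ₁c := ms.W.of_postcomp κ₁c πc hπcW (by rw [hκ₁cπ]; exact hf)
  have hκ₂cW : ms.W κ₂c := ms.W.of_postcomp κ₂c πc hπcW (by rw [hκ₂cπ]; exact ms.w_id B)
  -- Step 3: the latching pushouts at the cofibration vertex
  obtain ⟨PB₁, tleg₁, aleg₁, sqPB₁⟩ :
      ∃ (PB₁ : M) (tleg₁ : Ta ⟶ PB₁) (aleg₁ : A' ⟶ PB₁), IsPushout κ₁a i tleg₁ aleg₁ :=
    ⟨_, _, _, IsPushout.of_hasPushout κ₁a i⟩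
  obtain ⟨L, ψ₁, ι₂, sqL⟩ :
      ∃ (L : M) (ψ₁ : PB₁ ⟶ L) (ι₂ : A' ⟶ L), IsPushout (κ₂a ≫ tleg₁) i ψ₁ ι₂ :=
    ⟨_, _, _, IsPushout.of_hasPushout _ _⟩
  have hm₁w : κ₁a ≫ (πa ≫ i) = i ≫ 𝟙 A' := by
    rw [← Category.assoc, hκ₁aπ, Category.id_comp, Category.comp_id]
  obtain ⟨m₁, htlm₁, halm₁⟩ :
      ∃ m₁ : PB₁ ⟶ A', tleg₁ ≫ m₁ = πa ≫ i ∧ aleg₁ ≫ m₁ = 𝟙 A' :=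
    ⟨sqPB₁.desc _ _ hm₁w, sqPB₁.inl_desc _ _ _, sqPB₁.inr_desc _ _ _⟩
  have hmw : (κ₂a ≫ tleg₁) ≫ m₁ = i ≫ 𝟙 A' := by
    rw [Category.assoc, htlm₁, ← Category.assoc, hκ₂aπ, Category.id_comp, Category.comp_id]
  obtain ⟨m, hψ₁m, hι₂m⟩ : ∃ m : L ⟶ A', ψ₁ ≫ m = m₁ ∧ ι₂ ≫ m = 𝟙 A' :=
    ⟨sqL.desc _ _ hmw, sqL.inl_desc _ _ _, sqL.inr_desc _ _ _⟩
  obtain ⟨Tb, γL, πb, hγL, hπbF, hπbW, hfb⟩ := ms.fact_cof_trivFib m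
  obtain ⟨lT, hlT_def⟩ : ∃ k : Ta ⟶ Tb, k = tleg₁ ≫ ψ₁ ≫ γL := ⟨_, rfl⟩
  obtain ⟨κ₁b, hκ₁b_def⟩ : ∃ k : A' ⟶ Tb, k = aleg₁ ≫ ψ₁ ≫ γL := ⟨_, rfl⟩
  obtain ⟨κ₂b, hκ₂b_def⟩ : ∃ k : A' ⟶ Tb, k = ι₂ ≫ γL := ⟨_, rfl⟩
  have hκ₁bπ : κ₁b ≫ πb = 𝟙 A' := by
    rw [hκ₁b_def]; simp only [Category.assoc]; rw [hfb, hψ₁m, halm₁]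
  have hκ₂bπ : κ₂b ≫ πb = 𝟙 A' := by
    rw [hκ₂b_def, Category.assoc, hfb, hι₂m]
  have hlTπ : lT ≫ πb = πa ≫ i := by
    rw [hlT_def]; simp only [Category.assoc]; rw [hfb, hψ₁m, htlm₁]
  have hκ₁bW : ms.W κ₁b := ms.W.of_postcomp κ₁b πb hπbW (by rw [hκ₁bπ]; exact ms.w_id A')
  have hκ₂bW : ms.W κ₂b := ms.W.of_postcomp κ₂b πb hπbW (by rw [hκ₂bπ]; exact ms.w_id A')
  -- naturality at the cofibration vertex
  have hnatl₁ : i ≫ κ₁b = κ₁a ≫ lT := by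
    rw [hκ₁b_def, hlT_def]; simp only [← Category.assoc]; rw [sqPB₁.w]
  have hnatl₂ : i ≫ κ₂b = κ₂a ≫ lT := by
    rw [hκ₂b_def, hlT_def]; simp only [← Category.assoc]; rw [sqL.w]
  -- the relative latching map of κ₁ is a trivial cofibration
  have hψ₁C : ms.Cof ψ₁ := ms.cof_pushout sqL.flip hi
  have hwφ₁C : ms.Cof (ψ₁ ≫ γL) := ms.cof_comp hψ₁C hγL
  have haleg₁TC : ms.Cof aleg₁ ∧ ms.W aleg₁ := ms.trivcof_pushout sqPB₁ ⟨hκ₁aC, hκ₁aW⟩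
  have hwφ₁W : ms.W (ψ₁ ≫ γL) :=
    ms.W.of_precomp aleg₁ (ψ₁ ≫ γL) haleg₁TC.2 (by rw [← hκ₁b_def]; exact hκ₁bW)
  -- Step 5: the relative latching data for κ₂
  obtain ⟨PB₂, tleg₂, aleg₂, sqPB₂⟩ :
      ∃ (PB₂ : M) (tleg₂ : Ta ⟶ PB₂) (aleg₂ : A' ⟶ PB₂), IsPushout κ₂a i tleg₂ aleg₂ :=
    ⟨_, _, _, IsPushout.of_hasPushout κ₂a i⟩
  have hψ₂w : κ₂a ≫ (tleg₁ ≫ ψ₁) = i ≫ ι₂ := by rw [← Category.assoc, sqL.w]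
  obtain ⟨ψ₂, htl₂ψ, hal₂ψ⟩ :
      ∃ ψ₂ : PB₂ ⟶ L, tleg₂ ≫ ψ₂ = tleg₁ ≫ ψ₁ ∧ aleg₂ ≫ ψ₂ = ι₂ :=
    ⟨sqPB₂.desc _ _ hψ₂w, sqPB₂.inl_desc _ _ _, sqPB₂.inr_desc _ _ _⟩
  have t0 : IsPushout tleg₁ tleg₂ ψ₁ ψ₂ := by
    apply IsPushout.of_left _ htl₂ψ.symm sqPB₂
    rw [hal₂ψ]; exact sqL
  have sqΨ₂ : IsPushout (κ₁a ≫ tleg₂) i ψ₂ (aleg₁ ≫ ψ₁) := sqPB₁.paste_horiz t0.flip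
  have hψ₂C : ms.Cof ψ₂ := ms.cof_pushout sqΨ₂.flip hi
  have hwφ₂C : ms.Cof (ψ₂ ≫ γL) := ms.cof_comp hψ₂C hγL
  have haleg₂TC : ms.Cof aleg₂ ∧ ms.W aleg₂ := ms.trivcof_pushout sqPB₂ ⟨hκ₂aC, hκ₂aW⟩
  have hwφ₂W : ms.W (ψ₂ ≫ γL) :=
    ms.W.of_precomp aleg₂ (ψ₂ ≫ γL) haleg₂TC.2
      (by rw [← Category.assoc, hal₂ψ, ← hκ₂b_def]; exact hκ₂bW)
  -- Step 6: the structure map rT of the cylinder span, by lifting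
  haveI := ms.lift_cof_trivFib γa πc hγa hπcF hπcW
  have sqrT : CommSq (coprod.map (𝟙 A) f ≫ γc) γa πc (πa ≫ f) := by
    constructor
    rw [Category.assoc, hfc, ← Category.assoc, hfa, coprod.map_desc]
    apply coprod.hom_ext <;> simp
  obtain ⟨rT, hrT1, hrT2⟩ :
      ∃ rT : Ta ⟶ Tc, γa ≫ rT = coprod.map (𝟙 A) f ≫ γc ∧ rT ≫ πc = πa ≫ f :=
    ⟨sqrT.lift, sqrT.fac_left, sqrT.fac_right⟩
  have hnatr₁ : 𝟙 A ≫ κ₁c = κ₁a ≫ rT := by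
    rw [Category.id_comp, hκ₁c_def, hκ₁a_def, Category.assoc, hrT1, ← Category.assoc,
      coprod.inl_map, Category.id_comp]
  have hnatr₂ : f ≫ κ₂c = κ₂a ≫ rT := by
    rw [hκ₂c_def, hκ₂a_def, Category.assoc, hrT1, ← Category.assoc, ← Category.assoc,
      coprod.inr_map]
  -- Step 7: assemble the pushouts and the comparison maps
  obtain ⟨PT, bT, cT, sqT⟩ :
      ∃ (PT : M) (bT : Tb ⟶ PT) (cT : Tc ⟶ PT), IsPushout lT rT bT cT :=
    ⟨_, _, _, IsPushout.of_hasPushout lT rT⟩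
  obtain ⟨cκ₁, hcκ₁_def⟩ : ∃ k : A' ⟶ PT, k = κ₁b ≫ bT := ⟨_, rfl⟩
  have hcκ₂w : i ≫ (κ₂b ≫ bT) = f ≫ (κ₂c ≫ cT) := by
    rw [← Category.assoc, hnatl₂, Category.assoc, sqT.w, ← Category.assoc, ← hnatr₂,
      Category.assoc]
  obtain ⟨cκ₂, hf'cκ₂, hi'cκ₂⟩ :
      ∃ cκ₂ : B' ⟶ PT, f' ≫ cκ₂ = κ₂b ≫ bT ∧ i' ≫ cκ₂ = κ₂c ≫ cT :=
    ⟨sq.flip.desc _ _ hcκ₂w, sq.flip.inl_desc _ _ _, sq.flip.inr_desc _ _ _⟩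
  have hcρw : lT ≫ (πb ≫ f') = rT ≫ (πc ≫ i') := by
    rw [← Category.assoc, hlTπ, ← Category.assoc, hrT2, Category.assoc, Category.assoc,
      ← sq.w]
  obtain ⟨cρ, hbTcρ, hcTcρ⟩ :
      ∃ cρ : PT ⟶ B', bT ≫ cρ = πb ≫ f' ∧ cT ≫ cρ = πc ≫ i' :=
    ⟨sqT.desc _ _ hcρw, sqT.inl_desc _ _ _, sqT.inr_desc _ _ _⟩
  -- Ken Brown for κ₁
  have hκ₁TC : ms.Cof cκ₁ ∧ ms.W cκ₁ := by
    refine ms.kenBrown (wφ := ψ₁ ≫ γL) hnatr₁ (IsPushout.id_vert i) sqT sqPB₁.flip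
      hκ₁b_def.symm hlT_def.symm ⟨hκ₁cC, hκ₁cW⟩ ⟨hwφ₁C, hwφ₁W⟩ ?_ ?_
    · rw [Category.id_comp, hcκ₁_def]
    · rw [hcκ₁_def, ← Category.assoc, hnatl₁, Category.assoc, sqT.w, ← Category.assoc,
        ← hnatr₁, Category.id_comp]
  -- Ken Brown for κ₂
  have hκ₂TC : ms.Cof cκ₂ ∧ ms.W cκ₂ := by
    refine ms.kenBrown (wφ := ψ₂ ≫ γL) hnatr₂ sq.flip sqT sqPB₂.flip
      ?_ ?_ ⟨hκ₂cC, hκ₂cW⟩ ⟨hwφ₂C, hwφ₂W⟩ hf'cκ₂ hi'cκ₂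
    · rw [← Category.assoc, hal₂ψ, ← hκ₂b_def]
    · rw [← Category.assoc, htl₂ψ, Category.assoc, ← hlT_def]
  -- conclusion by two-out-of-three
  have hE1 : cκ₂ ≫ cρ = 𝟙 B' := by
    apply sq.flip.hom_ext
    · rw [← Category.assoc, hf'cκ₂, Category.assoc, hbTcρ, ← Category.assoc, hκ₂bπ,
        Category.id_comp, Category.comp_id]
    · rw [← Category.assoc, hi'cκ₂, Category.assoc, hcTcρ, ← Category.assoc, hκ₂cπ,
        Category.id_comp, Category.comp_id]
  have hcρW : ms.W cρ := ms.W.of_precomp cκ₂ cρ hκ₂TC.2 (by rw [hE1]; exact ms.w_id B')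
  have hfinal : f' = cκ₁ ≫ cρ := by
    rw [hcκ₁_def, Category.assoc, hbTcρ, ← Category.assoc, hκ₁bπ, Category.id_comp]
  rw [hfinal]
  exact ms.W.comp_mem _ _ hκ₁TC.2 hcρW
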